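/- The (p,q)-exponentials e_{p,q}(z) = Σ_{n=0}^∞ p^{n(n-1)/2} z^n / ((p,q);(p,q))_n and E_{p,q}(z) = Σ_{n=0}^∞ q^{n(n-1)/2} z^n / ((p,q);(p,q))_n satisfy e_{p,q}(z) · E_{p,q}(-z) = 1, for 0 ≤ |q| < p ≤ 1 and |z| small enough that both series converge absolutely. -/

import Mathlib

/-- `((p,q);(p,q))ₙ = ∏_{j=1}^{n} (pʲ - qʲ)`. -/
def pqFact (p q : ℂ) (n : ℕ) : ℂ := ∏ j ∈ Finset.range n, (p ^ (j + 1) - q ^ (j + 1))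

/-- The `(p,q)`-exponential `e_{p,q}(z)`. -/
noncomputable def pqExpE (p q z : ℂ) : ℂ := ∑' n : ℕ, p ^ (n * (n - 1) / 2) * z ^ n / pqFact p q n

/-- The `(p,q)`-exponential `E_{p,q}(z)`. -/
noncomputable def pqExpBigE (p q z : ℂ) : ℂ := ∑' n : ℕ, q ^ (n * (n - 1) / 2) * z ^ n / pqFact p q n

namespace PqAux

def pqB (p q : ℂ) : ℕ → ℕ → ℂ
  | 0, 0 => 1
  | 0, _+1 => 0
  | n+1, 0 => pqB p q n 0
  | n+1, k+1 => p ^ (n - k) * pqB p q n k + q ^ (k+1) * pqB p q n (k+1)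

lemma pqB_zero (p q : ℂ) : ∀ n, pqB p q n 0 = 1
  | 0 => rfl
  | n+1 => pqB_zero p q n

lemma pqB_of_lt (p q : ℂ) : ∀ n k, n < k → pqB p q n k = 0
  | 0, _+1, _ => rfl
  | n+1, k+1, h => by
      show p ^ (n-k) * pqB p q n k + q^(k+1) * pqB p q n (k+1) = 0
      rw [pqB_of_lt p q n k (by omega), pqB_of_lt p q n (k+1) (by omega)]
      ring

lemma pqB_self (p q : ℂ) : ∀ n, pqB p q n n = 1
  | 0 => rfl
  | n+1 => by
      show p ^ (n-n) * pqB p q n n + q^(n+1) * pqB p q n (n+1) = 1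
      rw [pqB_self p q n, pqB_of_lt p q n (n+1) (by omega)]
      simp

lemma pqFact_succ (p q : ℂ) (n : ℕ) :
    pqFact p q (n+1) = pqFact p q n * (p^(n+1) - q^(n+1)) := Finset.prod_range_succ _ n

lemma pqB_mul (p q : ℂ) : ∀ n k, k ≤ n →
    pqB p q n k * (pqFact p q k * pqFact p q (n - k)) = pqFact p q n
  | 0, 0, _ => by simp [pqB, pqFact]
  | n+1, 0, _ => by simp [pqB_zero, pqFact]
  | n+1, k+1, h => by
      show (p ^ (n-k) * pqB p q n k + q^(k+1) * pqB p q n (k+1)) * _ = _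
      rcases Nat.lt_or_ge n (k+1) with h'|h'
      · have hk : k = n := by omega
        subst hk
        rw [pqB_of_lt p q k (k+1) (by omega), pqB_self]
        simp [pqFact]
      · have ih1 := pqB_mul p q n k (by omega)
        have ih2 := pqB_mul p q n (k+1) h'
        have e1 : n + 1 - (k+1) = n - k := by omega
        have e2 : n - k = (n - (k+1)) + 1 := by omega
        rw [e2, pqFact_succ p q (n-(k+1))] at ih1
        rw [pqFact_succ p q k] at ih2
        have hp1 : (p:ℂ)^(n+1) = p^((n-(k+1))+1) * p^(k+1) := by rw [← pow_add]; congr 1; omega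
        have hq1 : (q:ℂ)^(n+1) = q^((n-(k+1))+1) * q^(k+1) := by rw [← pow_add]; congr 1; omega
        rw [e1, e2, pqFact_succ p q (n-(k+1)), pqFact_succ p q k, pqFact_succ p q n, hp1, hq1]
        linear_combination (p^((n-(k+1))+1) * (p^(k+1) - q^(k+1))) * ih1
          + (q^(k+1) * (p^((n-(k+1))+1) - q^((n-(k+1))+1))) * ih2

end PqAux

namespace PqAux2
open PqAux

noncomputable def pqS (p q : ℂ) (n : ℕ) : ℂ :=
  ∑ k ∈ Finset.range (n+1),
    (-1:ℂ)^(n-k) * p^(Nat.choose k 2) * q^(Nat.choose (n-k) 2) * pqB p q n k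

lemma pow_split (x : ℂ) {a b c : ℕ} (h : a = b + c) : x^a = x^b * x^c := by
  rw [h, pow_add]

lemma pqS_succ (p q : ℂ) (n : ℕ) : pqS p q (n+1) = (p^n - q^n) * pqS p q n := by
  set G : ℕ → ℂ := fun k =>
    (-1:ℂ)^(n-k) * p^(Nat.choose k 2) * q^(Nat.choose (n-k) 2) * pqB p q n k with hG
  set H : ℕ → ℂ := fun k =>
    (-1:ℂ)^(n+1-k) * p^(Nat.choose k 2) * q^(Nat.choose (n+1-k) 2) *
      (q^k * pqB p q n k) with hHdef
  have step1 : pqS p q (n+1)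
      = ∑ k ∈ Finset.range (n+1), (p^n * G k + H (k+1)) + H 0 := by
    rw [pqS, Finset.sum_range_succ']
    congr 1
    · apply Finset.sum_congr rfl
      intro k hk
      have hk' : k ≤ n := by simpa using Nat.lt_succ_iff.mp (Finset.mem_range.mp hk)
      show (-1:ℂ)^(n+1-(k+1)) * p^(Nat.choose (k+1) 2) * q^(Nat.choose (n+1-(k+1)) 2) *
          (p^(n-k) * pqB p q n k + q^(k+1) * pqB p q n (k+1)) = _
      have e1 : n+1-(k+1) = n-k := by omega
      have e2 : (p:ℂ)^(Nat.choose (k+1) 2) = p^(Nat.choose k 2) * p^k := by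
        apply pow_split
        rw [Nat.choose_two_right, Nat.choose_two_right, Nat.triangle_succ]
      have e3 : (p:ℂ)^k * p^(n-k) = p^n := by rw [← pow_add]; congr 1; omega
      rw [e1, e2, hHdef, hG]
      simp only [e1]
      rw [e2]
      linear_combination ((-1:ℂ)^(n-k) * p^(Nat.choose k 2) * q^(Nat.choose (n-k) 2)
        * pqB p q n k) * e3
    · show (-1:ℂ)^(n+1-0) * p^(Nat.choose 0 2) * q^(Nat.choose (n+1-0) 2) * pqB p q (n+1) 0 = H 0
      have : pqB p q (n+1) 0 = pqB p q n 0 := rfl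
      rw [this, hHdef]
      simp
  have step2 : ∑ k ∈ Finset.range (n+1), H (k+1) + H 0 = ∑ k ∈ Finset.range (n+1), H k := by
    rw [← Finset.sum_range_succ']
    rw [Finset.sum_range_succ]
    have : H (n+1) = 0 := by
      rw [hHdef]; simp [pqB_of_lt p q n (n+1) (by omega)]
    rw [this, add_zero]
  have step3 : ∀ k ∈ Finset.range (n+1), H k = -q^n * G k := by
    intro k hk
    have hk' : k ≤ n := Nat.lt_succ_iff.mp (Finset.mem_range.mp hk)
    simp only [hHdef, hG]
    have e1 : n+1-k = (n-k)+1 := by omega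
    have e2 : (-1:ℂ)^((n-k)+1) = -(-1:ℂ)^(n-k) := by rw [pow_succ]; ring
    have e3 : (q:ℂ)^(Nat.choose ((n-k)+1) 2) = q^(Nat.choose (n-k) 2) * q^(n-k) := by
      apply pow_split
      rw [Nat.choose_two_right, Nat.choose_two_right, Nat.triangle_succ]
    have e4 : (q:ℂ)^(n-k) * q^k = q^n := by rw [← pow_add]; congr 1; omega
    rw [e1, e2, e3]
    linear_combination (-(-1:ℂ)^(n-k) * p^(Nat.choose k 2) * q^(Nat.choose (n-k) 2)
      * pqB p q n k) * e4
  calc pqS p q (n+1) = ∑ k ∈ Finset.range (n+1), (p^n * G k + H (k+1)) + H 0 := step1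
    _ = p^n * (∑ k ∈ Finset.range (n+1), G k)
        + (∑ k ∈ Finset.range (n+1), H (k+1) + H 0) := by
          rw [Finset.sum_add_distrib, Finset.mul_sum]; ring
    _ = p^n * (∑ k ∈ Finset.range (n+1), G k) + ∑ k ∈ Finset.range (n+1), H k := by
          rw [step2]
    _ = p^n * (∑ k ∈ Finset.range (n+1), G k)
        + ∑ k ∈ Finset.range (n+1), (-q^n * G k) := by
          rw [Finset.sum_congr rfl step3]
    _ = (p^n - q^n) * (∑ k ∈ Finset.range (n+1), G k) := by
          rw [← Finset.mul_sum]; ring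
    _ = (p^n - q^n) * pqS p q n := rfl

lemma pqS_eq_zero (p q : ℂ) : ∀ n, 1 ≤ n → pqS p q n = 0
  | 1, _ => by rw [show (1:ℕ) = 0 + 1 from rfl, pqS_succ]; simp
  | n+2, _ => by
      rw [pqS_succ, pqS_eq_zero p q (n+1) (by omega), mul_zero]

end PqAux2

open PqAux PqAux2

lemma norm_pqFact_ge (p : ℝ) (q : ℂ) (hq : ‖q‖ < p) (n : ℕ) :
    p ^ (n*(n-1)/2) * (p - ‖q‖)^n ≤ ‖pqFact (p:ℂ) q n‖ := by
  have hp0 : 0 < p := lt_of_le_of_lt (norm_nonneg q) hq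
  have key : ∀ j, p^j * (p - ‖q‖) ≤ ‖((p:ℂ))^(j+1) - q^(j+1)‖ := by
    intro j
    have h1 : ‖((p:ℂ))^(j+1)‖ - ‖q^(j+1)‖ ≤ ‖((p:ℂ))^(j+1) - q^(j+1)‖ := norm_sub_norm_le _ _
    have h2 : ‖((p:ℂ))^(j+1)‖ = p^(j+1) := by
      rw [norm_pow, Complex.norm_real, Real.norm_of_nonneg hp0.le]
    have h3 : ‖q^(j+1)‖ = ‖q‖^(j+1) := norm_pow q (j+1)
    have h4 : ‖q‖^j ≤ p^j := pow_le_pow_left₀ (norm_nonneg q) hq.le j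
    rw [h2, h3, pow_succ, pow_succ] at h1
    nlinarith [mul_le_mul_of_nonneg_right h4 (norm_nonneg q)]
  calc p ^ (n*(n-1)/2) * (p - ‖q‖)^n
      = ∏ j ∈ Finset.range n, (p^j * (p - ‖q‖)) := by
        rw [Finset.prod_mul_distrib, Finset.prod_pow_eq_pow_sum, Finset.sum_range_id,
          Finset.prod_const, Finset.card_range]
    _ ≤ ∏ j ∈ Finset.range n, ‖((p:ℂ))^(j+1) - q^(j+1)‖ :=
        Finset.prod_le_prod
          (fun j _ => mul_nonneg (pow_nonneg hp0.le j) (by linarith))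
          (fun j _ => key j)
    _ = ‖pqFact (p:ℂ) q n‖ := by rw [pqFact, norm_prod]

lemma pqFact_ne_zero (p : ℝ) (q : ℂ) (hq : ‖q‖ < p) (n : ℕ) : pqFact (p:ℂ) q n ≠ 0 := by
  have hp0 : 0 < p := lt_of_le_of_lt (norm_nonneg q) hq
  have h := norm_pqFact_ge p q hq n
  intro h0
  rw [h0, norm_zero] at h
  have : 0 < p ^ (n*(n-1)/2) * (p - ‖q‖)^n := by
    apply mul_pos (pow_pos hp0 _) (pow_pos (by linarith) _)
  linarith

lemma summable_aux (p : ℝ) (q : ℂ) (hq : ‖q‖ < p) (c z : ℂ) (hc : ‖c‖ ≤ p)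
    (hz : ‖z‖ < p - ‖q‖) :
    Summable (fun n => ‖c ^ (n*(n-1)/2) * z ^ n / pqFact (p:ℂ) q n‖) := by
  have hp0 : 0 < p := lt_of_le_of_lt (norm_nonneg q) hq
  have hδ : 0 < p - ‖q‖ := by linarith
  have hgeo : Summable fun n : ℕ => (‖z‖/(p-‖q‖))^n :=
    summable_geometric_of_lt_one (by positivity) (by rwa [div_lt_one hδ])
  refine Summable.of_nonneg_of_le (fun n => norm_nonneg _) (fun n => ?_) hgeo
  rw [norm_div, norm_mul, norm_pow, norm_pow, div_pow]
  have hF := norm_pqFact_ge p q hq n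
  have hFpos : 0 < p ^ (n*(n-1)/2) * (p - ‖q‖)^n :=
    mul_pos (pow_pos hp0 _) (pow_pos hδ _)
  calc ‖c‖ ^ (n*(n-1)/2) * ‖z‖ ^ n / ‖pqFact (p:ℂ) q n‖
      ≤ p ^ (n*(n-1)/2) * ‖z‖ ^ n / (p ^ (n*(n-1)/2) * (p - ‖q‖)^n) := by
        apply div_le_div₀ (by positivity)
          (mul_le_mul_of_nonneg_right (pow_le_pow_left₀ (norm_nonneg c) hc _) (by positivity))
          hFpos hF
    _ = ‖z‖ ^ n / (p - ‖q‖)^n := by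
        rw [mul_comm (p ^ (n*(n-1)/2)) (‖z‖^n), mul_div_assoc]
        congr 1
        have hA : (0:ℝ) < p ^ (n*(n-1)/2) := by positivity
        rw [inv_eq_one_div, div_eq_div_iff (by positivity) (by positivity)]
        ring

lemma cauchy_coeff (p : ℝ) (q : ℂ) (hq : ‖q‖ < p) (z : ℂ) (n : ℕ) (hn : n ≠ 0) :
    ∑ kl ∈ Finset.HasAntidiagonal.antidiagonal n,
      ((p:ℂ)^(kl.1*(kl.1-1)/2) * z^kl.1 / pqFact (p:ℂ) q kl.1) *
      (q^(kl.2*(kl.2-1)/2) * (-z)^kl.2 / pqFact (p:ℂ) q kl.2) = 0 := by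
  rw [Finset.Nat.sum_antidiagonal_eq_sum_range_succ_mk]
  have hFn := pqFact_ne_zero p q hq n
  have key : ∀ k ∈ Finset.range (n+1),
      ((p:ℂ)^(k*(k-1)/2) * z^k / pqFact (p:ℂ) q k) *
        (q^((n-k)*((n-k)-1)/2) * (-z)^(n-k) / pqFact (p:ℂ) q (n-k))
      = (z^n / pqFact (p:ℂ) q n) *
        ((-1:ℂ)^(n-k) * (p:ℂ)^(Nat.choose k 2) * q^(Nat.choose (n-k) 2) * pqB (p:ℂ) q n k) := by
    intro k hk
    have hk' : k ≤ n := Nat.lt_succ_iff.mp (Finset.mem_range.mp hk)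
    have hFk := pqFact_ne_zero p q hq k
    have hFl := pqFact_ne_zero p q hq (n-k)
    have hB := pqB_mul (p:ℂ) q n k hk'
    have hzl : (-z)^(n-k) = (-1:ℂ)^(n-k) * z^(n-k) := by rw [neg_pow]
    have hzn : z^k * z^(n-k) = z^n := by rw [← pow_add]; congr 1; omega
    rw [Nat.choose_two_right, Nat.choose_two_right, hzl]
    field_simp
    linear_combination (-((p:ℂ)^(k*(k-1)/2) * q^((n-k)*((n-k)-1)/2)
      * z^n)) * hB
      + ((p:ℂ)^(k*(k-1)/2) * q^((n-k)*((n-k)-1)/2) * pqFact (p:ℂ) q n) * hzn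
  rw [Finset.sum_congr rfl key, ← Finset.mul_sum]
  have : (∑ k ∈ Finset.range (n+1),
      (-1:ℂ)^(n-k) * (p:ℂ)^(Nat.choose k 2) * q^(Nat.choose (n-k) 2) * pqB (p:ℂ) q n k)
      = pqS (p:ℂ) q n := rfl
  rw [this, pqS_eq_zero _ _ n (by omega), mul_zero]

theorem pqExp_mul_eq_one (p : ℝ) (q : ℂ) (hq : ‖q‖ < p) (hp : p ≤ 1) :
    ∃ ε > 0, ∀ z : ℂ, ‖z‖ < ε →
      pqExpE (p : ℂ) q z * pqExpBigE (p : ℂ) q (-z) = 1 := by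
  have hp0 : 0 < p := lt_of_le_of_lt (norm_nonneg q) hq
  refine ⟨p - ‖q‖, by linarith, fun z hz => ?_⟩
  have hcp : ‖(p:ℂ)‖ ≤ p := by rw [Complex.norm_real, Real.norm_of_nonneg hp0.le]
  have hcq : ‖q‖ ≤ p := hq.le
  have hz' : ‖-z‖ < p - ‖q‖ := by rwa [norm_neg]
  have hf := summable_aux p q hq (p:ℂ) z hcp hz
  have hg := summable_aux p q hq q (-z) hcq hz'
  rw [pqExpE, pqExpBigE, tsum_mul_tsum_eq_tsum_sum_antidiagonal_of_summable_norm hf hg]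
  rw [tsum_eq_single 0 (fun n hn => cauchy_coeff p q hq z n hn)]
  simp [pqFact]
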